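/- Suppose the block operator matrix L is a bijection of X^n, and let γ = (γ_{ij})_{i,j=1}^n be the unique operator matrix solving L·γ = diag(Γ_1,…,Γ_n), i.e. γ_{ij} + Γ_i Σ_{k≠i} γ_{kj} = δ_{ij} Γ_i for all i,j. Then the components also satisfy γ_{ij} = Γ_i(δ_{ij} I − Σ_{k≠i} γ_{kj}) = (δ_{ij} I − Σ_{k≠j} γ_{ik}) Γ_j, the operator I − G is bijective, and the operator Γ defined by I − Γ = (I − G)^{−1} is given by Γ = Σ_{1≤i,j≤n} γ_{ij}. -/

import Mathlib

/-- With `X` a complex vector space, `n ≥ 1`, `G i` linear with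
`I - G i` bijective and reflection operators `Γ i` given by `I - Γ i = (I - G i)⁻¹`:
if the block operator matrix `L` (diagonal `I`, row-`i` off-diagonal entries `Γ i`)
is a bijection of `Xⁿ` and `γ = (γ i j)` solves `L ⬝ γ = diag (Γ 1, …, Γ n)`,
i.e. `γ i j + Γ i * ∑_{k ≠ i} γ k j = δ_{ij} Γ i`, then
`γ i j = Γ i (δ_{ij} I - ∑_{k ≠ i} γ k j) = (δ_{ij} I - ∑_{k ≠ j} γ i k) Γ j`,
the operator `I - G` is bijective (`G = ∑ i, G i`), and the reflection operator `Γ`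
defined by `I - Γ = (I - G)⁻¹` equals `∑_{i,j} γ i j`. -/
theorem stmt_1 {X : Type*} [AddCommGroup X] [Module ℂ X] (n : ℕ) (hn : 1 ≤ n)
    (G Γ : Fin n → Module.End ℂ X)
    (hΓ : ∀ i, (1 - G i) * (1 - Γ i) = 1 ∧ (1 - Γ i) * (1 - G i) = 1)
    (hL : Function.Bijective (fun φ : Fin n → X =>
      fun i => φ i + Γ i (∑ k ∈ Finset.univ.erase i, φ k)))
    (γ : Fin n → Fin n → Module.End ℂ X)
    (hγ : ∀ i j, γ i j + Γ i * (∑ k ∈ Finset.univ.erase i, γ k j)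
      = if i = j then Γ i else 0) :
    (∀ i j, γ i j = Γ i * ((if i = j then 1 else 0) - ∑ k ∈ Finset.univ.erase i, γ k j)
      ∧ γ i j = ((if i = j then 1 else 0) - ∑ k ∈ Finset.univ.erase j, γ i k) * Γ j)
    ∧ Function.Bijective ⇑(1 - ∑ i, G i : Module.End ℂ X)
    ∧ ∀ Γtot : Module.End ℂ X,
        (1 - ∑ i, G i) * (1 - Γtot) = 1 → (1 - Γtot) * (1 - ∑ i, G i) = 1 →
        Γtot = ∑ i, ∑ j, γ i j := by
  classical
  have hΓl : ∀ i, (1 - G i) * (1 - Γ i) = 1 := fun i => (hΓ i).1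
  have hΓr : ∀ i, (1 - Γ i) * (1 - G i) = 1 := fun i => (hΓ i).2
  have e1 : ∀ i, (1 - G i) * Γ i = -(G i) := by
    intro i
    have h : (1 - G i) * Γ i = (1 - G i) - (1 - G i) * (1 - Γ i) := by noncomm_ring
    rw [h, hΓl i]; abel
  have e2 : ∀ i, Γ i * (1 - G i) = -(G i) := by
    intro i
    have h : Γ i * (1 - G i) = (1 - G i) - (1 - Γ i) * (1 - G i) := by noncomm_ring
    rw [h, hΓr i]; abel
  set Gs : Module.End ℂ X := ∑ i, G i with hGsdef
  set s : Fin n → Module.End ℂ X := fun j => ∑ k, γ k j with hsdef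
  set t : Fin n → Module.End ℂ X := fun i => ∑ j, γ i j with htdef
  have herase : ∀ i j, (∑ k ∈ Finset.univ.erase i, γ k j) = s j - γ i j := by
    intro i j
    rw [Finset.sum_erase_eq_sub (Finset.mem_univ i)]
  have hteras : ∀ i j, (∑ k ∈ Finset.univ.erase j, γ i k) = t i - γ i j := by
    intro i j
    rw [Finset.sum_erase_eq_sub (Finset.mem_univ j)]
  -- Part 1a
  have part1a : ∀ i j,
      γ i j = Γ i * ((if i = j then 1 else 0) - ∑ k ∈ Finset.univ.erase i, γ k j) := by
    intro i j
    have h := hγ i j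
    have h' : γ i j = (if i = j then Γ i else 0)
        - Γ i * (∑ k ∈ Finset.univ.erase i, γ k j) := by rw [← h]; abel
    rw [h', mul_sub]
    congr 1
    split_ifs <;> simp
  -- key formula γ i j = G i * (s j - δ)
  have hA : ∀ i j, γ i j = G i * (s j - (if i = j then 1 else 0)) := by
    intro i j
    have h := hγ i j
    rw [herase i j] at h
    have h2 : (1 - Γ i) * γ i j = (if i = j then Γ i else 0) - Γ i * s j := by
      rw [← h]; noncomm_ring
    have h3 : γ i j = (1 - G i) * ((1 - Γ i) * γ i j) := by
      rw [← mul_assoc, hΓl i, one_mul]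
    rw [h3, h2]
    by_cases hij : i = j
    · simp only [if_pos hij]
      calc (1 - G i) * (Γ i - Γ i * s j) = ((1 - G i) * Γ i) * (1 - s j) := by noncomm_ring
        _ = -(G i) * (1 - s j) := by rw [e1 i]
        _ = G i * (s j - 1) := by noncomm_ring
    · simp only [if_neg hij]
      calc (1 - G i) * (0 - Γ i * s j) = ((1 - G i) * Γ i) * (-(s j)) := by noncomm_ring
        _ = -(G i) * (-(s j)) := by rw [e1 i]
        _ = G i * (s j - 0) := by noncomm_ring
  have hB : ∀ j, (1 - Gs) * s j = -(G j) := by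
    intro j
    have h1 : s j = ∑ i, G i * (s j - (if i = j then 1 else 0)) := by
      conv_lhs => rw [hsdef]
      exact Finset.sum_congr rfl fun i _ => hA i j
    have h2 : ∑ i, G i * (s j - (if i = j then 1 else 0)) = Gs * s j - G j := by
      rw [hGsdef]
      simp only [mul_sub, Finset.sum_sub_distrib, ← Finset.sum_mul, mul_ite, mul_one,
        mul_zero, Finset.sum_ite_eq', Finset.mem_univ, if_true]
    have heq : s j = Gs * s j - G j := h1.trans h2
    have h3 : s j - Gs * s j = -(G j) := by
      nth_rewrite 1 [heq]; abel
    calc (1 - Gs) * s j = s j - Gs * s j := by noncomm_ring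
      _ = -(G j) := h3
  -- injectivity of 1 - Gs
  have hinj : Function.Injective ⇑(1 - Gs) := by
    intro a b hab
    have h0 : (1 - Gs) (a - b) = 0 := by rw [map_sub, hab, sub_self]
    set u := a - b with hudef
    have hu : Gs u = u := by
      have : u - Gs u = 0 := by
        simpa [LinearMap.sub_apply, Module.End.one_apply] using h0
      have := sub_eq_zero.mp this
      exact this.symm
    have hGsu : ∑ k, G k u = u := by
      rw [← LinearMap.sum_apply, ← hGsdef, hu]
    have hLφ : (fun φ : Fin n → X => fun i => φ i + Γ i (∑ k ∈ Finset.univ.erase i, φ k))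
          (fun i => G i u)
        = (fun φ : Fin n → X => fun i => φ i + Γ i (∑ k ∈ Finset.univ.erase i, φ k)) 0 := by
      funext i
      show G i u + Γ i (∑ k ∈ Finset.univ.erase i, G k u)
          = (0 : Fin n → X) i + Γ i (∑ k ∈ Finset.univ.erase i, (0 : Fin n → X) k)
      have hsum : ∑ k ∈ Finset.univ.erase i, G k u = u - G i u := by
        rw [Finset.sum_erase_eq_sub (Finset.mem_univ i), hGsu]
      have key := DFunLike.congr_fun (e2 i) u
      simp only [Module.End.mul_apply, LinearMap.sub_apply, Module.End.one_apply,
        LinearMap.neg_apply] at key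
      rw [hsum, key]
      simp
    have hφ0 := hL.injective hLφ
    have hGiu : ∀ i, G i u = 0 := fun i => congrFun hφ0 i
    have : u = 0 := by
      rw [← hGsu]
      simp [hGiu]
    exact sub_eq_zero.mp this
  -- surjectivity of 1 - Gs
  have hsurj : Function.Surjective ⇑(1 - Gs) := by
    intro x
    obtain ⟨φ, hφ⟩ := hL.surjective (fun i => Γ i x)
    set σ := ∑ k, φ k with hσdef
    have hφi : ∀ i, φ i = G i σ - G i x := by
      intro i
      have h := congrFun hφ i
      simp only [Finset.sum_erase_eq_sub (Finset.mem_univ i), ← hσdef] at h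
      -- h : φ i + Γ i (σ - φ i) = Γ i x
      rw [map_sub] at h
      have h1 : φ i - Γ i (φ i) = Γ i x - Γ i σ := by rw [← h]; abel
      have h2 : (1 - Γ i) (φ i) = Γ i (x - σ) := by
        simpa [LinearMap.sub_apply, Module.End.one_apply, map_sub] using h1
      have h3 : φ i = (1 - G i) ((1 - Γ i) (φ i)) := by
        rw [← Module.End.mul_apply, hΓl i, Module.End.one_apply]
      rw [h3, h2, ← Module.End.mul_apply, e1 i]
      simp only [LinearMap.neg_apply, map_sub]
      abel
    have hσeq : σ = Gs σ - Gs x := by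
      calc σ = ∑ i, φ i := hσdef
        _ = ∑ i, (G i σ - G i x) := Finset.sum_congr rfl fun i _ => hφi i
        _ = Gs σ - Gs x := by
            rw [hGsdef]
            simp [Finset.sum_sub_distrib, LinearMap.sum_apply]
    refine ⟨x - σ, ?_⟩
    have h0 : σ - (Gs σ - Gs x) = 0 := sub_eq_zero.mpr hσeq
    have hg : (1 - Gs) (x - σ) = x - (σ - (Gs σ - Gs x)) := by
      simp only [LinearMap.sub_apply, Module.End.one_apply, map_sub]
      abel
    show (1 - Gs) (x - σ) = x
    rw [hg, h0, sub_zero]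
  -- the inverse H of 1 - Gs
  let e : X ≃ₗ[ℂ] X := LinearEquiv.ofBijective (1 - Gs) ⟨hinj, hsurj⟩
  set H : Module.End ℂ X := (e.symm : X →ₗ[ℂ] X) with hHdef
  have hH1 : (1 - Gs) * H = 1 := by
    apply LinearMap.ext; intro x
    show (1 - Gs) (e.symm x) = x
    have h := e.apply_symm_apply x
    exact h
  have hH2 : H * (1 - Gs) = 1 := by
    apply LinearMap.ext; intro x
    show e.symm ((1 - Gs) x) = x
    have h : (1 - Gs) x = e x := rfl
    rw [h, e.symm_apply_apply]
  have hsj : ∀ j, s j = -(H * G j) := by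
    intro j
    calc s j = (H * (1 - Gs)) * s j := by rw [hH2, one_mul]
      _ = H * ((1 - Gs) * s j) := by rw [mul_assoc]
      _ = H * -(G j) := by rw [hB j]
      _ = -(H * G j) := by noncomm_ring
  have hHGs : H * Gs = H - 1 := by
    have h : H * Gs = H - H * (1 - Gs) := by noncomm_ring
    rw [h, hH2]
  have hGsH : Gs * H = H - 1 := by
    have h : Gs * H = H - (1 - Gs) * H := by noncomm_ring
    rw [h, hH1]
  have hSsum : ∑ j, s j = 1 - H := by
    calc ∑ j, s j = ∑ j, -(H * G j) := Finset.sum_congr rfl fun j _ => hsj j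
      _ = -(H * Gs) := by
          rw [hGsdef, Finset.mul_sum]
          simp
      _ = 1 - H := by rw [hHGs]; abel
  have ht : ∀ i, t i = -(G i * H) := by
    intro i
    calc t i = ∑ j, G i * (s j - (if i = j then 1 else 0)) :=
          Finset.sum_congr rfl fun j _ => hA i j
      _ = G i * ((∑ j, s j) - 1) := by
          rw [← Finset.mul_sum]
          congr 1
          rw [Finset.sum_sub_distrib]
          congr 1
          simp [Finset.sum_ite_eq]
      _ = G i * (1 - H - 1) := by rw [hSsum]
      _ = -(G i * H) := by noncomm_ring
  -- Part 1b
  have part1b : ∀ i j,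
      γ i j = ((if i = j then 1 else 0) - ∑ k ∈ Finset.univ.erase j, γ i k) * Γ j := by
    intro i j
    rw [hteras i j, ht i, hA i j, hsj j]
    by_cases hij : i = j
    · rw [if_pos hij, hij]
      symm
      calc (1 - (-(G j * H) - G j * (-(H * G j) - 1))) * Γ j
          = (1 + G j * H) * ((1 - G j) * Γ j) := by noncomm_ring
        _ = (1 + G j * H) * (-(G j)) := by rw [e1 j]
        _ = G j * (-(H * G j) - 1) := by noncomm_ring
    · rw [if_neg hij]
      symm
      calc (0 - (-(G i * H) - G i * (-(H * G j) - 0))) * Γ j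
          = (G i * H) * ((1 - G j) * Γ j) := by noncomm_ring
        _ = (G i * H) * (-(G j)) := by rw [e1 j]
        _ = G i * (-(H * G j) - 0) := by noncomm_ring
  refine ⟨fun i j => ⟨part1a i j, part1b i j⟩, ⟨hinj, hsurj⟩, ?_⟩
  intro Γt h1 h2
  have hHt : 1 - Γt = H := by
    calc 1 - Γt = (H * (1 - Gs)) * (1 - Γt) := by rw [hH2, one_mul]
      _ = H * ((1 - Gs) * (1 - Γt)) := by rw [mul_assoc]
      _ = H := by rw [h1, mul_one]
  have hΓt : Γt = 1 - H := by rw [← hHt]; abel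
  rw [hΓt]
  symm
  calc ∑ i, t i = ∑ i, -(G i * H) := Finset.sum_congr rfl fun i _ => ht i
    _ = -(Gs * H) := by
        rw [hGsdef, Finset.sum_mul]
        simp
    _ = 1 - H := by rw [hGsH]; abel
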